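/- Let ω^{(h)}_h be a σ-positive function on a subspace H_h of a complex Hilbert space H (with σ(f,g) = Im⟨f,g⟩). Then its extension to H defined by φ̃(f) = ω^{(h)}_h-value at f if f ∈ H_h and φ̃(f) = 0 if f ∉ H_h is σ-positive on all of H. -/

import Mathlib

open scoped InnerProductSpace ComplexOrder

noncomputable section
open scoped Classical

variable {H : Type*} [NormedAddCommGroup H] [InnerProductSpace ℂ H]

/-- `φ : H → ℂ` is `σ`-positive (for `σ(f,g) = Im⟪f,g⟫`) on a set `S ⊆ H`. -/
def IsSigmaPositiveOn (S : Set H) (φ : H → ℂ) : Prop :=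
  ∀ (n : ℕ) (a : Fin n → ℂ) (f : Fin n → H), (∀ j, f j ∈ S) →
    0 ≤ ∑ j : Fin n, ∑ k : Fin n,
      a j * (starRingEnd ℂ) (a k) *
        Complex.exp (-(Complex.I / 2) * ((⟪f j, f k⟫_ℂ).im : ℂ)) * φ (f j - f k)

/-- if `φ` is `σ`-positive on a closed complex subspace `H_h ⊆ H`,
then its extension by zero off `H_h` is `σ`-positive on all of `H`. -/
theorem zero_extension_sigma_positive
    (K : Submodule ℂ H) (hK : IsClosed (K : Set H)) (φ : H → ℂ)
    (hφ : IsSigmaPositiveOn (K : Set H) φ) :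
    IsSigmaPositiveOn (Set.univ : Set H) (fun f => if f ∈ K then φ f else 0) := by
  intro n a f _
  classical
  set T : Fin n → Fin n → ℂ := fun j k =>
    a j * (starRingEnd ℂ) (a k) *
      Complex.exp (-(Complex.I / 2) * ((⟪f j, f k⟫_ℂ).im : ℂ)) *
      (if f j - f k ∈ K then φ (f j - f k) else 0) with hT
  show 0 ≤ ∑ j, ∑ k, T j k
  have hRne : ∀ j : Fin n, (Finset.univ.filter (fun i => f j - f i ∈ K)).Nonempty := by
    intro j
    exact ⟨j, by simp [sub_self]⟩
  set c : Fin n → Fin n := fun j =>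
    (Finset.univ.filter (fun i => f j - f i ∈ K)).min' (hRne j) with hc
  have hc_mem : ∀ j, f j - f (c j) ∈ K := by
    intro j
    have := Finset.min'_mem _ (hRne j)
    simpa using this
  have hc_eq : ∀ j k, f j - f k ∈ K → c j = c k := by
    intro j k hjk
    have hfil : (Finset.univ.filter (fun i => f j - f i ∈ K)) =
        (Finset.univ.filter (fun i => f k - f i ∈ K)) := by
      ext i
      simp only [Finset.mem_filter, Finset.mem_univ, true_and]
      constructor
      · intro h
        have := K.sub_mem h hjk
        simpa [sub_sub_sub_cancel_left] using this
      · intro h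
        have := K.add_mem hjk h
        have h2 : f j - f k + (f k - f i) = f j - f i := by abel
        rwa [h2] at this
    simp only [hc]
    congr 1
  have hc_rev : ∀ j k, c j = c k → f j - f k ∈ K := by
    intro j k h
    have := K.sub_mem (hc_mem j) (hc_mem k)
    rw [h] at this
    have h2 : f j - f (c k) - (f k - f (c k)) = f j - f k := by abel
    rwa [h2] at this
  rw [← Finset.sum_fiberwise Finset.univ c (fun j => ∑ k, T j k)]
  apply Finset.sum_nonneg
  intro m _
  have hinner : ∀ j ∈ Finset.univ.filter (fun j => c j = m),
      (∑ k, T j k) = ∑ k ∈ Finset.univ.filter (fun k => c k = m), T j k := by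
    intro j hj
    simp only [Finset.mem_filter, Finset.mem_univ, true_and] at hj
    refine (Finset.sum_filter_of_ne ?_).symm
    intro k _ hTk
    have hmem : f j - f k ∈ K := by
      by_contra hcon
      apply hTk
      simp [hT, hcon]
    rw [← hj]
    exact (hc_eq j k hmem).symm
  rw [Finset.sum_congr rfl hinner]
  set s := Finset.univ.filter (fun j => c j = m) with hs
  have hsK : ∀ j ∈ s, f j - f m ∈ K := by
    intro j hj
    simp only [hs, Finset.mem_filter, Finset.mem_univ, true_and] at hj
    have := hc_mem j
    rwa [hj] at this
  set b : Fin n → ℂ := fun j =>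
    a j * Complex.exp (-(Complex.I / 2) * ((⟪f j, f m⟫_ℂ).im : ℂ)) with hb
  set F : Fin n → H := fun j => f j - f m with hF
  set e : Fin s.card ≃ s := s.equivFin.symm with he
  have key := hφ s.card (fun p => b (e p)) (fun p => F (e p))
    (fun p => hsK (e p) (e p).2)
  -- rewrite key's sum as the target sum
  have hterm : ∀ j ∈ s, ∀ k ∈ s,
      b j * (starRingEnd ℂ) (b k) *
        Complex.exp (-(Complex.I / 2) * ((⟪F j, F k⟫_ℂ).im : ℂ)) * φ (F j - F k)
      = T j k := by
    intro j hj k hk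
    have hjk : f j - f k ∈ K := by
      simp only [hs, Finset.mem_filter, Finset.mem_univ, true_and] at hj hk
      exact hc_rev j k (hj.trans hk.symm)
    have hFF : F j - F k = f j - f k := by simp only [hF]; abel
    have hIm : (⟪F j, F k⟫_ℂ).im =
        (⟪f j, f k⟫_ℂ).im - (⟪f j, f m⟫_ℂ).im + (⟪f k, f m⟫_ℂ).im := by
      simp only [hF, inner_sub_left, inner_sub_right]
      have h1 : (⟪f m, f k⟫_ℂ).im = -(⟪f k, f m⟫_ℂ).im := by
        rw [← inner_conj_symm (f k) (f m), Complex.conj_im, neg_neg]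
      have h2 : (⟪f m, f m⟫_ℂ).im = 0 := by
        have : (starRingEnd ℂ) ⟪f m, f m⟫_ℂ = ⟪f m, f m⟫_ℂ := inner_conj_symm (f m) (f m)
        have h := congrArg Complex.im this
        simp only [Complex.conj_im] at h
        linarith
      simp [Complex.sub_im, Complex.add_im, h1, h2]
      simp only [← Complex.ofReal_pow, Complex.ofReal_im]
      ring
    have hconj : (starRingEnd ℂ) (b k) =
        (starRingEnd ℂ) (a k) * Complex.exp ((Complex.I / 2) * ((⟪f k, f m⟫_ℂ).im : ℂ)) := by
      simp only [hb, map_mul]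
      congr 1
      rw [← Complex.exp_conj]
      congr 1
      simp only [map_mul, map_neg, map_div₀, Complex.conj_I, Complex.conj_ofReal, map_ofNat]
      ring
    have hexp : Complex.exp (-(Complex.I / 2) * ((⟪f j, f m⟫_ℂ).im : ℂ)) *
        Complex.exp ((Complex.I / 2) * ((⟪f k, f m⟫_ℂ).im : ℂ)) *
        Complex.exp (-(Complex.I / 2) * ((⟪F j, F k⟫_ℂ).im : ℂ)) =
        Complex.exp (-(Complex.I / 2) * ((⟪f j, f k⟫_ℂ).im : ℂ)) := by
      rw [← Complex.exp_add, ← Complex.exp_add]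
      congr 1
      rw [hIm]
      push_cast
      ring
    rw [hconj]
    simp only [hT, hjk, if_true, hb, hconj, hFF]
    linear_combination (a j * (starRingEnd ℂ) (a k) * φ (f j - f k)) * hexp
  calc (0:ℂ) ≤ ∑ p : Fin s.card, ∑ q : Fin s.card,
        b (e p) * (starRingEnd ℂ) (b (e q)) *
          Complex.exp (-(Complex.I / 2) * ((⟪F (e p), F (e q)⟫_ℂ).im : ℂ)) *
          φ (F (e p) - F (e q)) := key
    _ = ∑ j ∈ s, ∑ k ∈ s, T j k := by
        rw [← Finset.sum_coe_sort s (fun j => ∑ k ∈ s, T j k)]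
        rw [← Equiv.sum_comp s.equivFin.symm (fun x : s => ∑ k ∈ s, T (x : Fin n) k)]
        refine Finset.sum_congr rfl ?_
        intro p _
        rw [← Finset.sum_coe_sort s (fun k => T ((e p : s) : Fin n) k)]
        rw [← Equiv.sum_comp s.equivFin.symm (fun y : s => T ((e p : s) : Fin n) (y : Fin n))]
        refine Finset.sum_congr rfl ?_
        intro q _
        exact hterm (e p) (e p).2 (e q) (e q).2

end
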